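/- arXiv:1301.0087 — 2 statements merged into one kernel-verified Lean document; each statement's English description precedes it below -/
import Mathlib

section
/- Let X₁ have Gamma distribution with shape m₁ and rate α₁(s) = m₁ s / ω₁ in the variable s = 1/SNR, and X₂ with shape m₂ and rate α₂(s) = m₂ s / ω₂. Then as SNR → ∞, P(min(X₁,X₂) < γ_th) is asymptotically (1/(m Γ(m)))(m γ_th/ω)^m SNR^{−m}, where m = min(m₁,m₂), ω the corresponding ω-parameter, whenever m₁ ≠ m₂; if m₁ = m₂ = m the asymptotic constant is the sum of the two individual constants. -/
open MeasureTheory ProbabilityTheory Real Filter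

noncomputable def Jf (m γ r : ℝ) : ℝ := ∫ x in (0:ℝ)..γ, x ^ (m-1) * Real.exp (-(r*x))

noncomputable def Hf (m γ ω S : ℝ) : ℝ := (m / γ ^ m) * Jf m γ (m / (ω * S))

lemma gamma_Iio_eq (m r γ : ℝ) (hm : 0 < m) (hr : 0 < r) (hγ : 0 < γ) :
    ((gammaMeasure m r) (Set.Iio γ)).toReal = r ^ m / Real.Gamma m * Jf m γ r := by
  rw [gammaMeasure, withDensity_apply _ measurableSet_Iio]
  have hsplit : Set.Iio γ = Set.Iio 0 ∪ Set.Ico 0 γ := by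
    ext x; simp only [Set.mem_Iio, Set.mem_union, Set.mem_Ico]; constructor
    · intro h; rcases lt_or_ge x 0 with h'|h'; exacts [Or.inl h', Or.inr ⟨h', h⟩]
    · rintro (h|⟨_,h⟩) <;> [linarith; exact h]
  rw [hsplit, lintegral_union measurableSet_Ico (by
    simp only [Set.disjoint_iff_forall_ne, Set.mem_Iio, Set.mem_Ico]
    intro a ha b hb; intro h; subst h; linarith [hb.1]),
    lintegral_gammaPDF_of_nonpos le_rfl, zero_add,
    setLIntegral_congr (Ico_ae_eq_Ioc (a := (0:ℝ)) (b := γ))]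
  have hmeas : AEStronglyMeasurable (gammaPDFReal m r) (volume.restrict (Set.Ioc 0 γ)) :=
    (measurable_gammaPDFReal m r).aestronglyMeasurable
  have h2 := integral_eq_lintegral_of_nonneg_ae (μ := volume.restrict (Set.Ioc 0 γ))
    (ae_of_all _ fun x => gammaPDFReal_nonneg hm hr x) hmeas
  rw [show (fun x => ENNReal.ofReal (gammaPDFReal m r x)) = gammaPDF m r from rfl] at h2
  rw [← h2]
  rw [setIntegral_congr_fun measurableSet_Ioc
    (g := fun x => r ^ m / Real.Gamma m * (x ^ (m-1) * Real.exp (-(r*x))))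
    (fun x hx => by simp [gammaPDFReal, hx.1.le, mul_assoc])]
  rw [integral_const_mul, Jf, intervalIntegral.integral_of_le hγ.le]

lemma J_int0 (m γ : ℝ) (hm : 0 < m) :
    IntervalIntegrable (fun x : ℝ => x ^ (m-1)) volume 0 γ :=
  intervalIntegral.intervalIntegrable_rpow' (by linarith)

lemma J_int (m γ r : ℝ) (hm : 0 < m) (hγ : 0 < γ) (hr : 0 ≤ r) :
    IntervalIntegrable (fun x : ℝ => x ^ (m-1) * Real.exp (-(r*x))) volume 0 γ := by
  rw [intervalIntegrable_iff_integrableOn_Ioc_of_le hγ.le]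
  have hg : IntegrableOn (fun x : ℝ => x ^ (m-1)) (Set.Ioc 0 γ) volume :=
    (intervalIntegrable_iff_integrableOn_Ioc_of_le hγ.le).mp (J_int0 m γ hm)
  refine hg.integrable.mono ?_ ?_
  · exact (((measurable_id'.pow_const (m-1)).mul
      ((measurable_id.const_mul r).neg.exp)).aestronglyMeasurable).restrict
  · filter_upwards [ae_restrict_mem measurableSet_Ioc] with x hx
    have h1 : (0:ℝ) ≤ x ^ (m-1) := Real.rpow_nonneg hx.1.le _
    have h2 : Real.exp (-(r*x)) ≤ 1 := Real.exp_le_one_iff.mpr (by nlinarith [hx.1.le])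
    simp only [Real.norm_eq_abs, abs_mul, abs_of_nonneg h1, abs_of_pos (Real.exp_pos _)]
    nlinarith

lemma J_integral0 (m γ : ℝ) (hm : 0 < m) :
    ∫ x in (0:ℝ)..γ, x ^ (m-1) = γ ^ m / m := by
  rw [integral_rpow (Or.inl (by linarith))]
  rw [Real.zero_rpow (by linarith : m - 1 + 1 ≠ 0)]
  ring_nf

lemma J_le (m γ r : ℝ) (hm : 0 < m) (hγ : 0 < γ) (hr : 0 ≤ r) :
    Jf m γ r ≤ γ ^ m / m := by
  rw [← J_integral0 m γ hm]
  refine intervalIntegral.integral_mono_on hγ.le (J_int m γ r hm hγ hr) (J_int0 m γ hm) ?_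
  intro x hx
  have h1 : (0:ℝ) ≤ x ^ (m-1) := Real.rpow_nonneg hx.1 _
  have h2 : Real.exp (-(r*x)) ≤ 1 := Real.exp_le_one_iff.mpr (by nlinarith [hx.1])
  nlinarith

lemma J_ge (m γ r : ℝ) (hm : 0 < m) (hγ : 0 < γ) (hr : 0 ≤ r) :
    Real.exp (-(r*γ)) * (γ ^ m / m) ≤ Jf m γ r := by
  rw [← J_integral0 m γ hm, ← intervalIntegral.integral_const_mul]
  refine intervalIntegral.integral_mono_on hγ.le ((J_int0 m γ hm).const_mul _)
    (J_int m γ r hm hγ hr) ?_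
  intro x hx
  have h1 : (0:ℝ) ≤ x ^ (m-1) := Real.rpow_nonneg hx.1 _
  have h2 : Real.exp (-(r*γ)) ≤ Real.exp (-(r*x)) :=
    Real.exp_le_exp.mpr (by nlinarith [hx.2])
  nlinarith

lemma H_tendsto (m γ ω : ℝ) (hm : 0 < m) (hγ : 0 < γ) (hω : 0 < ω) :
    Tendsto (fun S => Hf m γ ω S) atTop (nhds 1) := by
  have hγm : (0:ℝ) < γ ^ m := Real.rpow_pos_of_pos hγ m
  have hr0 : Tendsto (fun S : ℝ => m / (ω * S)) atTop (nhds 0) := by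
    have h : Tendsto (fun S : ℝ => (m/ω) * S⁻¹) atTop (nhds ((m/ω) * 0)) :=
      tendsto_inv_atTop_zero.const_mul _
    rw [mul_zero] at h
    refine h.congr fun S => ?_
    simp [div_eq_mul_inv, mul_inv, mul_assoc, mul_comm]
  have hlow : Tendsto (fun S : ℝ => Real.exp (-(m / (ω * S) * γ))) atTop (nhds 1) := by
    have h1 : Tendsto (fun S : ℝ => -(m / (ω * S) * γ)) atTop (nhds 0) := by
      simpa using (hr0.mul_const γ).neg
    simpa [Function.comp_def] using (Real.continuous_exp.tendsto 0).comp h1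
  refine tendsto_of_tendsto_of_tendsto_of_le_of_le' hlow tendsto_const_nhds ?_ ?_
  · filter_upwards [eventually_gt_atTop (0:ℝ)] with S hS
    have hr : 0 ≤ m / (ω * S) := le_of_lt (div_pos hm (mul_pos hω hS))
    have := J_ge m γ (m / (ω * S)) hm hγ hr
    have h3 : Hf m γ ω S = (m / γ ^ m) * Jf m γ (m / (ω * S)) := rfl
    rw [h3]
    rw [show Real.exp (-(m / (ω * S) * γ)) =
      (m / γ ^ m) * (Real.exp (-(m / (ω * S) * γ)) * (γ ^ m / m)) by
        field_simp]
    exact mul_le_mul_of_nonneg_left this (by positivity)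
  · filter_upwards [eventually_gt_atTop (0:ℝ)] with S hS
    have hr : 0 ≤ m / (ω * S) := le_of_lt (div_pos hm (mul_pos hω hS))
    have := J_le m γ (m / (ω * S)) hm hγ hr
    have h3 : Hf m γ ω S = (m / γ ^ m) * Jf m γ (m / (ω * S)) := rfl
    rw [h3, show (1:ℝ) = (m / γ ^ m) * (γ ^ m / m) by field_simp]
    exact mul_le_mul_of_nonneg_left this (by positivity)

lemma F_eq (m ω γ S : ℝ) (hm : 0 < m) (hω : 0 < ω) (hγ : 0 < γ) (hS : 0 < S) :
    ((gammaMeasure m (m / (ω * S))) (Set.Iio γ)).toReal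
      = (1 / (m * Real.Gamma m)) * (m * γ / ω) ^ m * S ^ (-m) * Hf m γ ω S := by
  have hr : 0 < m / (ω * S) := div_pos hm (mul_pos hω hS)
  rw [gamma_Iio_eq m _ γ hm hr hγ, Hf]
  have h1 : (m / (ω * S)) ^ m = (m / ω) ^ m * S ^ (-m) := by
    rw [show m / (ω * S) = (m / ω) * S⁻¹ by field_simp,
      Real.mul_rpow (by positivity) (by positivity), Real.inv_rpow hS.le,
      ← Real.rpow_neg hS.le]
  have h2 : (m * γ / ω) ^ m = (m / ω) ^ m * γ ^ m := by
    rw [show m * γ / ω = (m / ω) * γ by ring, Real.mul_rpow (by positivity) hγ.le]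
  rw [h1, h2]
  have hΓ := Real.Gamma_pos_of_pos hm
  have hγm : (0:ℝ) < γ ^ m := Real.rpow_pos_of_pos hγ m
  field_simp

lemma min_prod_eq (μ ν : Measure ℝ) [IsProbabilityMeasure μ] [IsProbabilityMeasure ν] (γ : ℝ) :
    ((μ.prod ν) {p : ℝ × ℝ | min p.1 p.2 < γ}).toReal =
      (μ (Set.Iio γ)).toReal + (ν (Set.Iio γ)).toReal -
        (μ (Set.Iio γ)).toReal * (ν (Set.Iio γ)).toReal := by
  have hset : {p : ℝ × ℝ | min p.1 p.2 < γ} = (Set.Ici γ ×ˢ Set.Ici γ)ᶜ := by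
    ext p
    simp only [Set.mem_setOf_eq, Set.mem_compl_iff, Set.mem_prod, Set.mem_Ici, min_lt_iff]
    rw [not_and_or, not_le, not_le]
  have hIci : ∀ κ : Measure ℝ, ∀ _ : IsProbabilityMeasure κ,
      (κ (Set.Ici γ)).toReal = 1 - (κ (Set.Iio γ)).toReal := by
    intro κ hκ
    rw [← Set.compl_Iio, measure_compl measurableSet_Iio (measure_ne_top _ _),
      measure_univ, ENNReal.toReal_sub_of_le prob_le_one ENNReal.one_ne_top,
      ENNReal.toReal_one]
  rw [hset, measure_compl (measurableSet_Ici.prod measurableSet_Ici) (measure_ne_top _ _),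
    Measure.prod_prod, measure_univ,
    ENNReal.toReal_sub_of_le (mul_le_one' prob_le_one prob_le_one) ENNReal.one_ne_top,
    ENNReal.toReal_one, ENNReal.toReal_mul, hIci μ ‹_›, hIci ν ‹_›]
  ring

lemma tend_aux (C₁ C₂ m₁ m₂ : ℝ) (hC₁ : 0 < C₁) (hm₂ : 0 < m₂) (hlt : m₁ < m₂)
    (H₁ H₂ : ℝ → ℝ) (h₁ : Tendsto H₁ atTop (nhds 1)) (h₂ : Tendsto H₂ atTop (nhds 1)) :
    Tendsto (fun S : ℝ =>
        (C₁ * S ^ (-m₁) * H₁ S + C₂ * S ^ (-m₂) * H₂ S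
          - (C₁ * S ^ (-m₁) * H₁ S) * (C₂ * S ^ (-m₂) * H₂ S)) / (C₁ * S ^ (-m₁)))
      atTop (nhds 1) := by
  have t1 : Tendsto (fun S : ℝ => S ^ (m₁ - m₂)) atTop (nhds 0) := by
    have := tendsto_rpow_neg_atTop (show 0 < m₂ - m₁ by linarith)
    simpa [neg_sub] using this
  have t2 : Tendsto (fun S : ℝ => S ^ (-m₂)) atTop (nhds 0) := tendsto_rpow_neg_atTop hm₂
  have hg : Tendsto (fun S : ℝ =>
      H₁ S + (C₂ / C₁) * S ^ (m₁ - m₂) * H₂ S - C₂ * S ^ (-m₂) * (H₁ S * H₂ S))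
      atTop (nhds 1) := by
    have := (h₁.add (((tendsto_const_nhds (x := C₂ / C₁)).mul t1).mul h₂)).sub
      (((tendsto_const_nhds (x := C₂)).mul t2).mul (h₁.mul h₂))
    simpa using this
  refine hg.congr' ?_
  filter_upwards [eventually_gt_atTop (0:ℝ)] with S hS
  have hS1 : (0:ℝ) < S ^ (-m₁) := Real.rpow_pos_of_pos hS _
  have hS2 : S ^ (-m₂) = S ^ (-m₁) * S ^ (m₁ - m₂) := by
    rw [← Real.rpow_add hS]; ring_nf
  rw [hS2]
  field_simp

lemma tend_aux_eq (C₁ C₂ m : ℝ) (hC₁ : 0 < C₁) (hC₂ : 0 < C₂) (hm : 0 < m)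
    (H₁ H₂ : ℝ → ℝ) (h₁ : Tendsto H₁ atTop (nhds 1)) (h₂ : Tendsto H₂ atTop (nhds 1)) :
    Tendsto (fun S : ℝ =>
        (C₁ * S ^ (-m) * H₁ S + C₂ * S ^ (-m) * H₂ S
          - (C₁ * S ^ (-m) * H₁ S) * (C₂ * S ^ (-m) * H₂ S)) / ((C₁ + C₂) * S ^ (-m)))
      atTop (nhds 1) := by
  have t2 : Tendsto (fun S : ℝ => S ^ (-m)) atTop (nhds 0) := tendsto_rpow_neg_atTop hm
  have hsum : C₁ + C₂ ≠ 0 := by positivity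
  have hg : Tendsto (fun S : ℝ =>
      (C₁ * H₁ S + C₂ * H₂ S) / (C₁ + C₂) - (C₁ * C₂ / (C₁ + C₂)) * S ^ (-m) * (H₁ S * H₂ S))
      atTop (nhds 1) := by
    have := ((((tendsto_const_nhds (x := C₁)).mul h₁).add
      ((tendsto_const_nhds (x := C₂)).mul h₂)).div_const (C₁ + C₂)).sub
      ((((tendsto_const_nhds (x := C₁ * C₂ / (C₁ + C₂))).mul t2)).mul (h₁.mul h₂))
    have heq : (C₁ * 1 + C₂ * 1) / (C₁ + C₂) - C₁ * C₂ / (C₁ + C₂) * 0 * (1 * 1) = 1 := by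
      field_simp
      ring
    rw [heq] at this
    exact this
  refine hg.congr' ?_
  filter_upwards [eventually_gt_atTop (0:ℝ)] with S hS
  have hS1 : (0:ℝ) < S ^ (-m) := Real.rpow_pos_of_pos hS _
  field_simp

/-- Asymptotics of the outage probability of the minimum of two independent
Gamma (Nakagami-`m`) hop SNRs, whose rates scale as `mᵢ / (ωᵢ * SNR)`. -/
theorem min_gamma_outage_asymptotic (m₁ m₂ ω₁ ω₂ γth : ℝ)
    (hm₁ : 0 < m₁) (hm₂ : 0 < m₂) (hω₁ : 0 < ω₁) (hω₂ : 0 < ω₂) (hγth : 0 < γth) :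
    (m₁ ≠ m₂ →
      Filter.Tendsto
        (fun SNR : ℝ =>
          (((gammaMeasure m₁ (m₁ / (ω₁ * SNR))).prod
              (gammaMeasure m₂ (m₂ / (ω₂ * SNR))))
            {p : ℝ × ℝ | min p.1 p.2 < γth}).toReal /
          ((1 / ((min m₁ m₂) * Real.Gamma (min m₁ m₂))) *
            ((min m₁ m₂) * γth / (if m₁ < m₂ then ω₁ else ω₂)) ^ (min m₁ m₂) *
            SNR ^ (-(min m₁ m₂))))
        atTop (nhds 1)) ∧
    (m₁ = m₂ →
      Filter.Tendsto
        (fun SNR : ℝ =>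
          (((gammaMeasure m₁ (m₁ / (ω₁ * SNR))).prod
              (gammaMeasure m₂ (m₂ / (ω₂ * SNR))))
            {p : ℝ × ℝ | min p.1 p.2 < γth}).toReal /
          (((1 / (m₁ * Real.Gamma m₁)) * (m₁ * γth / ω₁) ^ m₁ +
              (1 / (m₂ * Real.Gamma m₂)) * (m₂ * γth / ω₂) ^ m₂) *
            SNR ^ (-(min m₁ m₂))))
        atTop (nhds 1)) := by
  have hΓ₁ := Real.Gamma_pos_of_pos hm₁
  have hΓ₂ := Real.Gamma_pos_of_pos hm₂
  set C₁ : ℝ := 1 / (m₁ * Real.Gamma m₁) * (m₁ * γth / ω₁) ^ m₁ with hC₁def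
  set C₂ : ℝ := 1 / (m₂ * Real.Gamma m₂) * (m₂ * γth / ω₂) ^ m₂ with hC₂def
  have hC₁ : 0 < C₁ := by
    rw [hC₁def]; positivity
  have hC₂ : 0 < C₂ := by
    rw [hC₂def]; positivity
  have hH₁ := H_tendsto m₁ γth ω₁ hm₁ hγth hω₁
  have hH₂ := H_tendsto m₂ γth ω₂ hm₂ hγth hω₂
  have key : ∀ S : ℝ, 0 < S →
      (((gammaMeasure m₁ (m₁ / (ω₁ * S))).prod (gammaMeasure m₂ (m₂ / (ω₂ * S))))
          {p : ℝ × ℝ | min p.1 p.2 < γth}).toReal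
        = C₁ * S ^ (-m₁) * Hf m₁ γth ω₁ S + C₂ * S ^ (-m₂) * Hf m₂ γth ω₂ S
          - (C₁ * S ^ (-m₁) * Hf m₁ γth ω₁ S) * (C₂ * S ^ (-m₂) * Hf m₂ γth ω₂ S) := by
    intro S hS
    haveI := isProbabilityMeasure_gammaMeasure hm₁ (div_pos hm₁ (mul_pos hω₁ hS))
    haveI := isProbabilityMeasure_gammaMeasure hm₂ (div_pos hm₂ (mul_pos hω₂ hS))
    rw [min_prod_eq, F_eq m₁ ω₁ γth S hm₁ hω₁ hγth hS, F_eq m₂ ω₂ γth S hm₂ hω₂ hγth hS]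
  constructor
  · intro hne
    rcases hne.lt_or_gt with hlt | hlt
    · have haux := tend_aux C₁ C₂ m₁ m₂ hC₁ hm₂ hlt
        (fun S => Hf m₁ γth ω₁ S) (fun S => Hf m₂ γth ω₂ S) hH₁ hH₂
      refine haux.congr' ?_
      filter_upwards [eventually_gt_atTop (0:ℝ)] with S hS
      rw [key S hS, min_eq_left hlt.le, if_pos hlt]
    · have haux := tend_aux C₂ C₁ m₂ m₁ hC₂ hm₁ hlt
        (fun S => Hf m₂ γth ω₂ S) (fun S => Hf m₁ γth ω₁ S) hH₂ hH₁
      refine haux.congr' ?_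
      filter_upwards [eventually_gt_atTop (0:ℝ)] with S hS
      rw [key S hS, min_eq_right hlt.le, if_neg (not_lt.mpr hlt.le)]
      rw [hC₁def, hC₂def]; ring
  · intro heq
    subst heq
    have haux := tend_aux_eq C₁ C₂ m₁ hC₁ hC₂ hm₁
      (fun S => Hf m₁ γth ω₁ S) (fun S => Hf m₁ γth ω₂ S) hH₁ hH₂
    refine haux.congr' ?_
    filter_upwards [eventually_gt_atTop (0:ℝ)] with S hS
    rw [key S hS, min_self]
end

section
/- In the DF-AF selection scheme with SC, the outage probability equals F_{γ₀}(γ_th) · ∏_{i=1}^K [ (1 − F_{γ_{1i}}(Δ)) F_{γ_{2i}}(γ_th) + F_{γ_{1i}}(Δ) ], assuming γ_th = Δ and all channel SNRs independent with continuous CDFs. -/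
open MeasureTheory ProbabilityTheory Finset

lemma dfaf_aux_if (Δ x₁ x₂ : ℝ) (h₁ : 0 ≤ x₁) (h₂ : 0 ≤ x₂) :
    ((if Δ ≤ x₁ then x₂ else x₁ * x₂ / (x₁ + x₂ + 1)) < Δ) ↔ (x₁ < Δ ∨ x₂ < Δ) := by
  split_ifs with h
  · constructor
    · exact fun hx => Or.inr hx
    · rintro (hx | hx)
      · linarith
      · exact hx
  · push_neg at h
    constructor
    · intro _; exact Or.inl h
    · intro _
      have hden : 0 < x₁ + x₂ + 1 := by linarith
      have hle : x₁ * x₂ / (x₁ + x₂ + 1) ≤ x₁ := by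
        rw [div_le_iff₀ hden]; nlinarith
      linarith

lemma dfaf_meas_lt_eq_le {Ω : Type*} [MeasurableSpace Ω] (μ : Measure Ω) [IsProbabilityMeasure μ]
    (Y : Ω → ℝ) (hc : Continuous fun t : ℝ => (μ {ω | Y ω ≤ t}).toReal) (Δ : ℝ) :
    μ {ω | Y ω < Δ} = μ {ω | Y ω ≤ Δ} := by
  set s : ℕ → Set Ω := fun n => {ω | Y ω ≤ Δ - 1 / (n + 1)} with hs
  have hmono : Monotone s := by
    intro m n hmn ω hω
    simp only [hs, Set.mem_setOf_eq] at hω ⊢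
    have h1 : (1 : ℝ) / (n + 1) ≤ 1 / (m + 1) := by
      apply one_div_le_one_div_of_le
      · positivity
      · exact_mod_cast Nat.succ_le_succ hmn
    linarith
  have hUnion : (⋃ n, s n) = {ω | Y ω < Δ} := by
    ext ω
    simp only [hs, Set.mem_iUnion, Set.mem_setOf_eq]
    constructor
    · rintro ⟨n, hn⟩
      have : (0 : ℝ) < 1 / (n + 1) := by positivity
      linarith
    · intro h
      obtain ⟨n, hn⟩ := exists_nat_one_div_lt (show (0:ℝ) < Δ - Y ω by linarith)
      exact ⟨n, by linarith⟩
  have h1 : Filter.Tendsto (fun n => (μ (s n)).toReal) Filter.atTop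
      (nhds ((μ (⋃ n, s n)).toReal)) :=
    (ENNReal.tendsto_toReal (measure_ne_top μ _)).comp (tendsto_measure_iUnion_atTop hmono)
  have ht : Filter.Tendsto (fun n : ℕ => Δ - 1 / (n + 1)) Filter.atTop (nhds Δ) := by
    have : Filter.Tendsto (fun n : ℕ => 1 / ((n : ℝ) + 1)) Filter.atTop (nhds 0) :=
      tendsto_one_div_add_atTop_nhds_zero_nat
    simpa using Filter.Tendsto.sub (tendsto_const_nhds (x := Δ)) this
  have h2 : Filter.Tendsto (fun n => (μ (s n)).toReal) Filter.atTop
      (nhds ((μ {ω | Y ω ≤ Δ}).toReal)) := (hc.tendsto Δ).comp ht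
  have hkey : (μ (⋃ n, s n)).toReal = (μ {ω | Y ω ≤ Δ}).toReal :=
    tendsto_nhds_unique h1 h2
  rw [hUnion] at hkey
  exact (ENNReal.toReal_eq_toReal_iff' (measure_ne_top μ _) (measure_ne_top μ _)).mp hkey

/-- Outage probability of opportunistic DF-AF selection relaying with
selection combining, with `γ_th = Δ`. The index `Sum.inl ()` is the direct
link SNR `γ₀`; `Sum.inr (Sum.inl i)` is the first-hop SNR `γ_{1i}` and
`Sum.inr (Sum.inr i)` the second-hop SNR `γ_{2i}`. -/
theorem dfaf_sc_outage_formula {Ω : Type*} [MeasurableSpace Ω] (μ : Measure Ω)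
    [IsProbabilityMeasure μ] (K : ℕ)
    (X : Unit ⊕ (Fin K ⊕ Fin K) → Ω → ℝ)
    (hmeas : ∀ j, Measurable (X j))
    (hnn : ∀ j ω, 0 ≤ X j ω)
    (hindep : iIndepFun X μ)
    (hcont : ∀ j, Continuous (fun t : ℝ => (μ {ω | X j ω ≤ t}).toReal))
    (Δ γth : ℝ) (hΔ : 0 < Δ) (hγthΔ : γth = Δ) :
    (μ {ω | X (Sum.inl ()) ω < γth ∧ ∀ i : Fin K,
        (if Δ ≤ X (Sum.inr (Sum.inl i)) ω then X (Sum.inr (Sum.inr i)) ω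
         else X (Sum.inr (Sum.inl i)) ω * X (Sum.inr (Sum.inr i)) ω /
           (X (Sum.inr (Sum.inl i)) ω + X (Sum.inr (Sum.inr i)) ω + 1)) < γth}).toReal =
      (μ {ω | X (Sum.inl ()) ω ≤ γth}).toReal *
        ∏ i : Fin K,
          ((1 - (μ {ω | X (Sum.inr (Sum.inl i)) ω ≤ Δ}).toReal) *
              (μ {ω | X (Sum.inr (Sum.inr i)) ω ≤ γth}).toReal +
            (μ {ω | X (Sum.inr (Sum.inl i)) ω ≤ Δ}).toReal) := by
  subst hγthΔ
  classical
  set E0 : Set Ω := X (Sum.inl ()) ⁻¹' Set.Iio γth with hE0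
  set A : Fin K → Set Ω := fun i => X (Sum.inr (Sum.inl i)) ⁻¹' Set.Iio γth with hA
  set B : Fin K → Set Ω := fun i => X (Sum.inr (Sum.inr i)) ⁻¹' Set.Iio γth with hB
  set E : Fin K → Set Ω := fun i => A i ∪ B i with hE
  -- rewrite the event
  have hset : {ω | X (Sum.inl ()) ω < γth ∧ ∀ i : Fin K,
      (if γth ≤ X (Sum.inr (Sum.inl i)) ω then X (Sum.inr (Sum.inr i)) ω
       else X (Sum.inr (Sum.inl i)) ω * X (Sum.inr (Sum.inr i)) ω /
         (X (Sum.inr (Sum.inl i)) ω + X (Sum.inr (Sum.inr i)) ω + 1)) < γth}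
      = E0 ∩ ⋂ i, E i := by
    ext ω
    simp only [Set.mem_setOf_eq, Set.mem_inter_iff, Set.mem_iInter, hE, Set.mem_union, hE0, hA,
      hB, Set.mem_preimage, Set.mem_Iio]
    exact and_congr Iff.rfl (forall_congr' fun i =>
      dfaf_aux_if γth _ _ (hnn _ ω) (hnn _ ω))
  -- measurability in grouped σ-algebras
  have hsup : ∀ (U : Set (Unit ⊕ (Fin K ⊕ Fin K))), ∀ j ∈ U, ∀ (t : Set ℝ), MeasurableSet t →
      MeasurableSet[⨆ j ∈ U, MeasurableSpace.comap (X j) (inferInstance : MeasurableSpace ℝ)]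
        (X j ⁻¹' t) := by
    intro U j hj t ht
    have hle : MeasurableSpace.comap (X j) inferInstance
        ≤ ⨆ j ∈ U, MeasurableSpace.comap (X j) (inferInstance : MeasurableSpace ℝ) :=
      le_iSup₂ (f := fun (j : Unit ⊕ (Fin K ⊕ Fin K)) (_ : j ∈ U) =>
        MeasurableSpace.comap (X j) inferInstance) j hj
    exact hle _ ⟨t, ht, rfl⟩
  -- key independence computation
  have key : ∀ s : Finset (Fin K), μ (E0 ∩ ⋂ i ∈ s, E i) = μ E0 * ∏ i ∈ s, μ (E i) := by
    intro s
    induction s using Finset.induction_on with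
    | empty => simp
    | @insert a s ha ih =>
      set T : Set (Unit ⊕ (Fin K ⊕ Fin K)) :=
        {Sum.inr (Sum.inl a), Sum.inr (Sum.inr a)} with hTdef
      have hIndep : Indep
          (⨆ j ∈ Tᶜ, MeasurableSpace.comap (X j) (inferInstance : MeasurableSpace ℝ))
          (⨆ j ∈ T, MeasurableSpace.comap (X j) (inferInstance : MeasurableSpace ℝ)) μ :=
        indep_iSup_of_disjoint (fun j => (hmeas j).comap_le) hindep.iIndep disjoint_compl_left
      have h1 : MeasurableSet[⨆ j ∈ Tᶜ,
          MeasurableSpace.comap (X j) (inferInstance : MeasurableSpace ℝ)]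
          (E0 ∩ ⋂ i ∈ s, E i) := by
        refine MeasurableSet.inter ?_ ?_
        · exact hsup _ _ (by simp [hTdef]) _ measurableSet_Iio
        · refine MeasurableSet.biInter s.countable_toSet (fun i hi => ?_)
          have hia : i ≠ a := fun h => ha (h ▸ hi)
          exact (hsup _ _ (by simp [hTdef, hia]) _ measurableSet_Iio).union
            (hsup _ _ (by simp [hTdef, hia]) _ measurableSet_Iio)
      have h2 : MeasurableSet[⨆ j ∈ T,
          MeasurableSpace.comap (X j) (inferInstance : MeasurableSpace ℝ)] (E a) :=
        (hsup _ _ (by simp [hTdef]) _ measurableSet_Iio).union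
          (hsup _ _ (by simp [hTdef]) _ measurableSet_Iio)
      have hmul := (hIndep.indepSet_of_measurableSet h1 h2).measure_inter_eq_mul
      have hre : E0 ∩ ⋂ i ∈ insert a s, E i = (E0 ∩ ⋂ i ∈ s, E i) ∩ E a := by
        rw [Finset.set_biInter_insert]
        ext ω; constructor
        · rintro ⟨h0, h1, h2⟩; exact ⟨⟨h0, h2⟩, h1⟩
        · rintro ⟨⟨h0, h2⟩, h1⟩; exact ⟨h0, h1, h2⟩
      rw [hre, hmul, ih, Finset.prod_insert ha]
      ring
  -- per-relay probability
  have hEi : ∀ i, μ (E i) = μ ((A i)ᶜ) * μ (B i) + μ (A i) := by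
    intro i
    have hABdisj : Disjoint (A i) ((A i)ᶜ ∩ B i) :=
      Disjoint.mono_right Set.inter_subset_left disjoint_compl_right
    have hunion : E i = A i ∪ ((A i)ᶜ ∩ B i) := by
      ext ω; by_cases h : ω ∈ A i <;> simp [hE, h]
    have hmB : MeasurableSet ((A i)ᶜ ∩ B i) :=
      ((hmeas _ measurableSet_Iio).compl).inter (hmeas _ measurableSet_Iio)
    have hpre : (A i)ᶜ ∩ B i =
        X (Sum.inr (Sum.inl i)) ⁻¹' Set.Ici γth ∩ X (Sum.inr (Sum.inr i)) ⁻¹' Set.Iio γth := by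
      rw [hA]
      simp only [← Set.preimage_compl, Set.compl_Iio]
      rfl
    have hind : IndepFun (X (Sum.inr (Sum.inl i))) (X (Sum.inr (Sum.inr i))) μ :=
      hindep.indepFun (by simp)
    have hAc : X (Sum.inr (Sum.inl i)) ⁻¹' Set.Ici γth = (A i)ᶜ := by
      rw [hA]
      simp only [← Set.preimage_compl, Set.compl_Iio]
    rw [hunion, measure_union hABdisj hmB, hpre,
      hind.measure_inter_preimage_eq_mul _ _ measurableSet_Ici measurableSet_Iio, hAc, add_comm]
  -- strict vs non-strict
  have hlt : ∀ j, μ (X j ⁻¹' Set.Iio γth) = μ {ω | X j ω ≤ γth} := fun j =>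
    dfaf_meas_lt_eq_le μ (X j) (hcont j) γth
  have hfinal : μ (E0 ∩ ⋂ i, E i) = μ E0 * ∏ i, μ (E i) := by
    have := key Finset.univ
    simpa using this
  rw [hset, hfinal, ENNReal.toReal_mul, ENNReal.toReal_prod]
  congr 1
  · exact congrArg ENNReal.toReal (hlt (Sum.inl ()))
  · refine Finset.prod_congr rfl fun i _ => ?_
    rw [hEi i, ENNReal.toReal_add (ENNReal.mul_ne_top (measure_ne_top μ _) (measure_ne_top μ _))
      (measure_ne_top μ _), ENNReal.toReal_mul]
    have hAval : (μ (A i)).toReal = (μ {ω | X (Sum.inr (Sum.inl i)) ω ≤ γth}).toReal :=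
      congrArg ENNReal.toReal (hlt _)
    have hBval : (μ (B i)).toReal = (μ {ω | X (Sum.inr (Sum.inr i)) ω ≤ γth}).toReal :=
      congrArg ENNReal.toReal (hlt _)
    have hAcval : (μ ((A i)ᶜ)).toReal = 1 - (μ {ω | X (Sum.inr (Sum.inl i)) ω ≤ γth}).toReal := by
      rw [prob_compl_eq_one_sub (hmeas _ measurableSet_Iio),
        ENNReal.toReal_sub_of_le prob_le_one ENNReal.one_ne_top, ENNReal.toReal_one, hAval]
    rw [hAval, hBval, hAcval]
end
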